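/- For all n ∈ ℕ and d ≥ 1, the rational function S_{n,d} = Σ_{k=0}^n (U_{d−1} ∘ T_{(d+1)^k}) · Π_{j=0}^k 1/(U_d ∘ T_{(d+1)^j}) equals U_{(d+1)^{n+1}−2} / U_{(d+1)^{n+1}−1}. -/

import Mathlib

open Polynomial Polynomial.Chebyshev Finset

noncomputable def toRat (p : Polynomial ℚ) : RatFunc ℚ := algebraMap (Polynomial ℚ) (RatFunc ℚ) p

noncomputable def Sfrac (n d : ℕ) : RatFunc ℚ :=
  ∑ k ∈ Finset.range (n + 1),
    toRat ((U ℚ ((d : ℤ) - 1)).comp (T ℚ (((d + 1) ^ k : ℕ) : ℤ))) *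
      ∏ j ∈ Finset.range (k + 1), (toRat ((U ℚ (d : ℤ)).comp (T ℚ (((d + 1) ^ j : ℕ) : ℤ))))⁻¹


lemma U_eval_one (n : ℤ) : (U ℚ n).eval 1 = n + 1 := by
  induction n using Polynomial.Chebyshev.induct with
  | zero => simp
  | one => simp [U_one]; norm_num
  | add_two k ih1 ih2 =>
    have h := congr_arg (eval 1) (U_add_two ℚ k)
    simp only [eval_sub, eval_mul, eval_ofNat, eval_X] at h
    rw [ih1, ih2] at h
    rw [h]; push_cast; ring
  | neg_add_one k ih1 ih2 =>
    have h := congr_arg (eval 1) (U_add_two ℚ (-k - 1))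
    simp only [eval_sub, eval_mul, eval_ofNat, eval_X] at h
    rw [show (-(k:ℤ) - 1 + 2 : ℤ) = -k + 1 by ring, show (-(k:ℤ) - 1 + 1 : ℤ) = -k by ring,
      ih1, ih2] at h
    push_cast at h ⊢
    linarith

lemma U_ne_zero {n : ℤ} (h : n ≠ -1) : U ℚ n ≠ 0 := by
  intro hz
  have h1 := U_eval_one n
  rw [hz] at h1
  simp at h1
  have : (n : ℚ) = -1 := by linarith
  exact h (by exact_mod_cast this)

lemma T_mul_U (m k : ℤ) : 2 * T ℚ m * U ℚ k = U ℚ (k + m) + U ℚ (k - m) := by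
  induction m using Polynomial.Chebyshev.induct with
  | zero => simp [two_mul]
  | one => rw [T_one, U_add_one ℚ k]; ring
  | add_two m ih1 ih2 =>
    have h₁ := U_add_two ℚ (k + m)
    have h₂ := U_sub_two ℚ (k - m)
    have h₃ := T_add_two ℚ m
    linear_combination (norm := ring_nf) U ℚ k * 2 * h₃ - h₂ - h₁ - ih2 + 2 * (X : ℚ[X]) * ih1
  | neg_add_one m ih1 ih2 =>
    have h₁ := U_add_two ℚ (k + (-m - 1))
    have h₂ := U_sub_two ℚ (k - (-m - 1))
    have h₃ := T_add_two ℚ (-m - 1)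
    linear_combination (norm := ring_nf) U ℚ k * 2 * h₃ - h₂ - h₁ - ih2 + 2 * (X : ℚ[X]) * ih1

lemma U_comp_T (a n : ℤ) : (U ℚ a).comp (T ℚ n) * U ℚ (n - 1) = U ℚ (n * a + n - 1) := by
  induction a using Polynomial.Chebyshev.induct with
  | zero => simp
  | one =>
    have h := T_mul_U n (n - 1)
    rw [U_one]
    simp only [mul_comp, ofNat_comp, X_comp]
    rw [show n - 1 + n = n * 1 + n - 1 by ring, show n - 1 - n = (-1 : ℤ) by ring,
      U_neg_one] at h
    linear_combination h
  | add_two a ih1 ih2 =>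
    have e₂ := congr_arg (comp · (T ℚ n)) (U_add_two ℚ a)
    simp only [sub_comp, mul_comp, ofNat_comp, X_comp] at e₂
    have h₁ := T_mul_U n (n * (a + 1) + n - 1)
    linear_combination (norm := ring_nf)
      U ℚ (n - 1) * e₂ + 2 * T ℚ n * ih1 - ih2 + h₁
  | neg_add_one a ih1 ih2 =>
    have e₂ := congr_arg (comp · (T ℚ n)) (U_add_two ℚ (-a - 1))
    simp only [sub_comp, mul_comp, ofNat_comp, X_comp] at e₂
    have h₁ := T_mul_U n (n * (-a) + n - 1)
    linear_combination (norm := ring_nf)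
      U ℚ (n - 1) * e₂ + 2 * T ℚ n * ih1 - ih2 + h₁

lemma key2 (d m : ℤ) :
    U ℚ (m - 2) * (U ℚ d).comp (T ℚ m) + (U ℚ (d - 1)).comp (T ℚ m)
      = U ℚ ((d + 1) * m - 2) := by
  induction d using Polynomial.Chebyshev.induct with
  | zero => simp
  | one =>
    have h := T_mul_U m (m - 2)
    rw [U_one]
    simp only [mul_comp, ofNat_comp, X_comp, show (1:ℤ) - 1 = 0 from rfl, U_zero, one_comp]
    rw [show m - 2 + m = (1 + 1) * m - 2 by ring, show m - 2 - m = (-2 : ℤ) by ring,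
      U_neg_two] at h
    linear_combination h
  | add_two d ih1 ih2 =>
    have e₂ := congr_arg (comp · (T ℚ m)) (U_add_two ℚ d)
    simp only [sub_comp, mul_comp, ofNat_comp, X_comp] at e₂
    have e₃ := congr_arg (comp · (T ℚ m)) (U_add_two ℚ (d - 1))
    simp only [sub_comp, mul_comp, ofNat_comp, X_comp] at e₃
    have h₁ := T_mul_U m ((d + 2) * m - 2)
    linear_combination (norm := ring_nf)
      U ℚ (m - 2) * e₂ + e₃ + 2 * T ℚ m * ih1 - ih2 + h₁
  | neg_add_one d ih1 ih2 =>
    have e₂ := congr_arg (comp · (T ℚ m)) (U_add_two ℚ (-d - 1))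
    simp only [sub_comp, mul_comp, ofNat_comp, X_comp] at e₂
    have e₃ := congr_arg (comp · (T ℚ m)) (U_add_two ℚ (-d - 2))
    simp only [sub_comp, mul_comp, ofNat_comp, X_comp] at e₃
    have h₁ := T_mul_U m ((-d + 1) * m - 2)
    linear_combination (norm := ring_nf)
      U ℚ (m - 2) * e₂ + e₃ + 2 * T ℚ m * ih1 - ih2 + h₁

lemma toRat_mul (p q : ℚ[X]) : toRat (p * q) = toRat p * toRat q := map_mul _ _ _
lemma toRat_add (p q : ℚ[X]) : toRat (p + q) = toRat p + toRat q := map_add _ _ _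
lemma toRat_ne_zero {p : ℚ[X]} (h : p ≠ 0) : toRat p ≠ 0 := RatFunc.algebraMap_ne_zero h

lemma prodU (d k : ℕ) (hd : 1 ≤ d) :
    ∏ j ∈ Finset.range (k + 1), toRat ((U ℚ (d : ℤ)).comp (T ℚ (((d + 1) ^ j : ℕ) : ℤ)))
      = toRat (U ℚ (((d : ℤ) + 1) ^ (k + 1) - 1)) := by
  induction k with
  | zero =>
    rw [zero_add, Finset.prod_range_one, pow_zero, Nat.cast_one, T_one, comp_X, pow_one]
    norm_num
  | succ k ih =>
    rw [Finset.prod_range_succ, ih, ← toRat_mul]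
    congr 1
    have h := U_comp_T (d : ℤ) (((d : ℤ) + 1) ^ (k + 1))
    rw [show (((d + 1) ^ (k + 1) : ℕ) : ℤ) = ((d : ℤ) + 1) ^ (k + 1) by push_cast; ring]
    rw [mul_comm, h]
    congr 1

theorem Sfrac_eqX (n d : ℕ) (hd : 1 ≤ d) :
    (∑ k ∈ Finset.range (n + 1),
    toRat ((U ℚ ((d : ℤ) - 1)).comp (T ℚ (((d + 1) ^ k : ℕ) : ℤ))) *
      ∏ j ∈ Finset.range (k + 1), (toRat ((U ℚ (d : ℤ)).comp (T ℚ (((d + 1) ^ j : ℕ) : ℤ))))⁻¹) =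
      toRat (U ℚ (((d : ℤ) + 1) ^ (n + 1) - 2)) / toRat (U ℚ (((d : ℤ) + 1) ^ (n + 1) - 1)) := by
  induction n with
  | zero =>
    simp only [Finset.sum_range_one, zero_add, Finset.prod_range_one, pow_zero, Nat.cast_one,
      T_one, comp_X, pow_one, div_eq_mul_inv]
    rw [show (d:ℤ) + 1 - 2 = (d:ℤ) - 1 by ring, show (d:ℤ) + 1 - 1 = (d:ℤ) by ring]
  | succ n ih =>
    rw [Finset.sum_range_succ, ih]
    set m : ℤ := ((d : ℤ) + 1) ^ (n + 1) with hm
    have hm2 : (2 : ℤ) ≤ m := by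
      rw [hm]
      calc (2:ℤ) = 2 ^ 1 := by norm_num
      _ ≤ 2 ^ (n+1) := pow_le_pow_right₀ (by norm_num) (by omega)
      _ ≤ ((d:ℤ)+1) ^ (n+1) := pow_le_pow_left₀ (by norm_num)
          (by exact_mod_cast Nat.succ_le_succ hd) _
    have hcast : (((d + 1) ^ (n + 1) : ℕ) : ℤ) = m := by rw [hm]; push_cast; ring
    rw [Finset.prod_inv_distrib, prodU d (n + 1) hd, hcast]
    have hBC : toRat ((U ℚ (d:ℤ)).comp (T ℚ m)) * toRat (U ℚ (m - 1))
        = toRat (U ℚ (((d : ℤ) + 1) ^ (n + 2) - 1)) := by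
      rw [← toRat_mul, U_comp_T]
      congr 2
    have hAC : toRat (U ℚ (m - 2)) * toRat ((U ℚ (d:ℤ)).comp (T ℚ m))
        + toRat ((U ℚ ((d:ℤ) - 1)).comp (T ℚ m))
        = toRat (U ℚ (((d : ℤ) + 1) ^ (n + 2) - 2)) := by
      rw [← toRat_mul, ← toRat_add, key2 (d:ℤ) m]
      congr 2
      rw [hm]; ring
    have hB : toRat (U ℚ (m - 1)) ≠ 0 := toRat_ne_zero (U_ne_zero (by omega))
    have hBC0 : toRat (U ℚ (((d : ℤ) + 1) ^ (n + 2) - 1)) ≠ 0 := by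
      refine toRat_ne_zero (U_ne_zero ?_)
      have : (2:ℤ) ≤ ((d:ℤ)+1) ^ (n+2) := by
        calc (2:ℤ) = 2 ^ 1 := by norm_num
        _ ≤ 2 ^ (n+2) := pow_le_pow_right₀ (by norm_num) (by omega)
        _ ≤ ((d:ℤ)+1) ^ (n+2) := pow_le_pow_left₀ (by norm_num)
            (by exact_mod_cast Nat.succ_le_succ hd) _
      omega
    have hC : toRat ((U ℚ (d:ℤ)).comp (T ℚ m)) ≠ 0 := by
      intro h
      rw [h, zero_mul] at hBC
      exact hBC0 hBC.symm
    rw [← hBC, ← hAC]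
    field_simp

theorem Sfrac_eq (n d : ℕ) (hd : 1 ≤ d) :
    Sfrac n d =
      toRat (U ℚ (((d : ℤ) + 1) ^ (n + 1) - 2)) / toRat (U ℚ (((d : ℤ) + 1) ^ (n + 1) - 1)) := by
  rw [Sfrac]
  exact Sfrac_eqX n d hd
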